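/- arXiv:1512.07091 — 4 statements merged into one kernel-verified Lean document; each statement's English description precedes it below -/
import Mathlib

section
/- There exists a constant C > 0, independent of p and n, such that for all integers p ≥ 1, all integers n > p, every linear subspace V ⊆ S̃_{p,n}, and all u ∈ S_{p,n}: ‖u‖²_{H¹(0,1)} ≤ C·( n²·‖u‖²_{L²(0,1)} + inf_{v ∈ V} ‖u − v‖²_{H¹(0,1)} ). (This is the robust inverse inequality for the boundary-corrected mass smoother L = h⁻²M + (I−Tᴵ)ᵀA(I−Tᴵ), where Tᴵ is the H¹-orthogonal projector onto V.) -/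
open MeasureTheory

/-- `u` belongs to the spline space `S_{p,n}` on `[0,1]` with uniform grid size
`h = 1/n`: it is `(p−1)`-times continuously differentiable on `[0,1]` and
coincides on each subinterval `[(i−1)h, ih]` with a polynomial of degree `≤ p`. -/
def IsSpline (p n : ℕ) (u : ℝ → ℝ) : Prop :=
  ContDiffOn ℝ (p - 1 : ℕ) u (Set.Icc 0 1) ∧
  ∀ i : ℕ, 1 ≤ i → i ≤ n →
    ∃ q : Polynomial ℝ, q.natDegree ≤ p ∧
      ∀ x ∈ Set.Icc (((i : ℝ) - 1) / n) ((i : ℝ) / n), u x = q.eval x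

/-- `u` belongs to the subspace `S̃_{p,n} ⊆ S_{p,n}` of splines whose odd-order
derivatives of order `< p` vanish at both endpoints of `[0,1]`. -/
def IsSplineTilde (p n : ℕ) (u : ℝ → ℝ) : Prop :=
  IsSpline p n u ∧
  ∀ l : ℕ, 2 * l + 1 < p →
    iteratedDerivWithin (2 * l + 1) u (Set.Icc 0 1) 0 = 0 ∧
    iteratedDerivWithin (2 * l + 1) u (Set.Icc 0 1) 1 = 0

/-- Squared `L²(0,1)`-norm. -/
noncomputable def L2sq (u : ℝ → ℝ) : ℝ := ∫ x in (0:ℝ)..1, u x ^ 2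

/-- Squared `H¹(0,1)`-seminorm (the derivative is taken pointwise; for the
functions considered it exists away from a finite set of knots). -/
noncomputable def H1semisq (u : ℝ → ℝ) : ℝ := ∫ x in (0:ℝ)..1, deriv u x ^ 2

/-- Squared `H¹(0,1)`-norm. -/
noncomputable def H1sq (u : ℝ → ℝ) : ℝ := L2sq u + H1semisq u

/-- `u` belongs to `H¹(0,1)` with (weak) derivative `u'`: `u` is continuous on
`[0,1]` and `u'` is square-integrable on `(0,1)` with
`u x = u 0 + ∫₀ˣ u'`. -/
def IsH1 (u u' : ℝ → ℝ) : Prop :=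
  ContinuousOn u (Set.Icc 0 1) ∧
  IntegrableOn u' (Set.Ioo 0 1) ∧
  IntegrableOn (fun x => u' x ^ 2) (Set.Ioo 0 1) ∧
  ∀ x ∈ Set.Icc (0:ℝ) 1, u x = u 0 + ∫ t in (0:ℝ)..x, u' t

noncomputable section SplineAux

open Polynomial Set Filter

/-- knot `k/n` -/
def kt (n k : ℕ) : ℝ := (k : ℝ) / n

lemma kt_zero (n : ℕ) : kt n 0 = 0 := by simp [kt]

lemma kt_self {n : ℕ} (hn : 0 < n) : kt n n = 1 := by
  unfold kt
  field_simp [kt, Nat.cast_ne_zero.mpr hn.ne']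

lemma kt_lt {n : ℕ} (hn : 0 < n) (k : ℕ) : kt n k < kt n (k+1) := by
  have : (0:ℝ) < n := by exact_mod_cast hn
  unfold kt
  apply div_lt_div_of_pos_right (by exact_mod_cast Nat.lt_succ_self k) this

lemma kt_le {n : ℕ} (hn : 0 < n) (k : ℕ) : kt n k ≤ kt n (k+1) := (kt_lt hn k).le

/-- inner product of two piecewise-polynomial systems -/
def Jv (n : ℕ) (Q R : ℕ → Polynomial ℝ) : ℝ :=
  ∑ k ∈ Finset.range n, ∫ x in kt n k..kt n (k+1), (Q k).eval x * (R k).eval x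

/-- derivative system -/
def DD (Q : ℕ → Polynomial ℝ) : ℕ → Polynomial ℝ := fun k => derivative (Q k)


-- per-element Cauchy–Schwarz, elementary proof
lemma integral_cs {a b : ℝ} (hab : a ≤ b) (f g : ℝ → ℝ) (hf : Continuous f) (hg : Continuous g) :
    (∫ x in a..b, f x * g x) ^ 2 ≤ (∫ x in a..b, f x ^ 2) * (∫ x in a..b, g x ^ 2) := by
  set A := ∫ x in a..b, f x ^ 2 with hA
  set B := ∫ x in a..b, f x * g x with hB
  set C := ∫ x in a..b, g x ^ 2 with hC
  have hAnn : 0 ≤ A := intervalIntegral.integral_nonneg hab (fun x _ => sq_nonneg _)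
  have key : ∀ t : ℝ, 0 ≤ t ^ 2 * A - 2 * t * B + C := by
    intro t
    have h1 : (0:ℝ) ≤ ∫ x in a..b, (t * f x - g x) ^ 2 :=
      intervalIntegral.integral_nonneg hab (fun x _ => sq_nonneg _)
    have h2 : (∫ x in a..b, (t * f x - g x) ^ 2) = t ^ 2 * A - 2 * t * B + C := by
      have e : (fun x => (t * f x - g x) ^ 2)
          = fun x => t ^ 2 * f x ^ 2 - 2 * t * (f x * g x) + g x ^ 2 := by
        funext x; ring
      rw [hA, hB, hC]
      rw [show (∫ x in a..b, (t * f x - g x) ^ 2) = ∫ x in a..b,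
        (t ^ 2 * f x ^ 2 - 2 * t * (f x * g x) + g x ^ 2) from by rw [e]]
      rw [intervalIntegral.integral_add, intervalIntegral.integral_sub,
        intervalIntegral.integral_const_mul, intervalIntegral.integral_const_mul]
      · exact (by fun_prop : Continuous fun x => t^2 * f x ^2).intervalIntegrable a b
      · exact (by fun_prop : Continuous fun x => 2*t*(f x * g x)).intervalIntegrable a b
      · exact ((by fun_prop : Continuous fun x => t^2 * f x ^2).sub
          (by fun_prop : Continuous fun x => 2*t*(f x * g x))).intervalIntegrable a b
      · exact (by fun_prop : Continuous fun x => g x ^2).intervalIntegrable a b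
    linarith [h1, h2.symm ▸ h1]
  rcases eq_or_lt_of_le hAnn with h0 | hpos
  · have hB0 : B = 0 := by
      by_contra hBne
      have ht := key ((C + 1) / (2 * B))
      have he : ((C+1)/(2*B))^2 * A - 2*((C+1)/(2*B))*B + C = -1 := by
        rw [← h0]; field_simp; ring
      rw [he] at ht; linarith
    rw [hB0, ← h0]; norm_num
  · have ht := key (B / A)
    have h2 : (B / A) ^ 2 * A - 2 * (B / A) * B + C = C - B ^ 2 / A := by
      field_simp; ring
    rw [h2] at ht
    have h3 : (C - B ^ 2 / A) * A = C * A - B ^ 2 := by field_simp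
    nlinarith [mul_nonneg ht hpos.le]

lemma sum_sqrt_mul_le {ι : Type*} (s : Finset ι) (a b : ι → ℝ)
    (ha : ∀ i ∈ s, 0 ≤ a i) (hb : ∀ i ∈ s, 0 ≤ b i) :
    ∑ i ∈ s, Real.sqrt (a i) * Real.sqrt (b i)
      ≤ Real.sqrt (∑ i ∈ s, a i) * Real.sqrt (∑ i ∈ s, b i) := by
  have h1 : (∑ i ∈ s, Real.sqrt (a i) * Real.sqrt (b i)) ^ 2
      ≤ (∑ i ∈ s, a i) * (∑ i ∈ s, b i) := by
    have h2 := Finset.sum_mul_sq_le_sq_mul_sq s (fun i => Real.sqrt (a i)) (fun i => Real.sqrt (b i))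
    have e1 : ∑ i ∈ s, Real.sqrt (a i) ^ 2 = ∑ i ∈ s, a i :=
      Finset.sum_congr rfl (fun i hi => Real.sq_sqrt (ha i hi))
    have e2 : ∑ i ∈ s, Real.sqrt (b i) ^ 2 = ∑ i ∈ s, b i :=
      Finset.sum_congr rfl (fun i hi => Real.sq_sqrt (hb i hi))
    calc (∑ i ∈ s, Real.sqrt (a i) * Real.sqrt (b i)) ^ 2
        ≤ (∑ i ∈ s, Real.sqrt (a i) ^ 2) * (∑ i ∈ s, Real.sqrt (b i) ^ 2) := h2
      _ = (∑ i ∈ s, a i) * (∑ i ∈ s, b i) := by rw [e1, e2]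
  have hnn : 0 ≤ ∑ i ∈ s, Real.sqrt (a i) * Real.sqrt (b i) :=
    Finset.sum_nonneg (fun i _ => mul_nonneg (Real.sqrt_nonneg _) (Real.sqrt_nonneg _))
  have := Real.sqrt_le_sqrt h1
  rwa [Real.sqrt_sq hnn, Real.sqrt_mul (Finset.sum_nonneg ha)] at this

lemma Jv_nonneg {n : ℕ} (hn : 0 < n) (Q : ℕ → Polynomial ℝ) : 0 ≤ Jv n Q Q := by
  apply Finset.sum_nonneg
  intro k _
  have : ∀ x, (Q k).eval x * (Q k).eval x = ((Q k).eval x) ^ 2 := fun x => (sq ((Q k).eval x)).symm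
  rw [show (∫ x in kt n k..kt n (k+1), (Q k).eval x * (Q k).eval x)
      = ∫ x in kt n k..kt n (k+1), ((Q k).eval x) ^ 2 from by simp_rw [this]]
  exact intervalIntegral.integral_nonneg (kt_le hn k) (fun x _ => sq_nonneg _)

lemma pint (q r : Polynomial ℝ) (a b : ℝ) :
    IntervalIntegrable (fun x => q.eval x * r.eval x) volume a b :=
  ((q.continuous_aeval).mul (r.continuous_aeval)).intervalIntegrable a b

lemma Jv_self (n : ℕ) (A : ℕ → Polynomial ℝ) :
    Jv n A A = ∑ k ∈ Finset.range n, ∫ x in kt n k..kt n (k+1), ((A k).eval x) ^ 2 := by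
  unfold Jv
  refine Finset.sum_congr rfl (fun k _ => ?_)
  refine intervalIntegral.integral_congr (fun x _ => ?_)
  ring

lemma Jv_add_left (n : ℕ) (A B C : ℕ → Polynomial ℝ) :
    Jv n (fun k => A k + B k) C = Jv n A C + Jv n B C := by
  unfold Jv
  rw [← Finset.sum_add_distrib]
  refine Finset.sum_congr rfl (fun k _ => ?_)
  rw [← intervalIntegral.integral_add (pint _ _ _ _) (pint _ _ _ _)]
  refine intervalIntegral.integral_congr (fun x _ => ?_)
  simp [eval_add]; ring

lemma Jv_comm (n : ℕ) (A B : ℕ → Polynomial ℝ) : Jv n A B = Jv n B A := by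
  unfold Jv
  refine Finset.sum_congr rfl (fun k _ => ?_)
  refine intervalIntegral.integral_congr (fun x _ => ?_)
  ring

lemma Jv_add_right (n : ℕ) (A B C : ℕ → Polynomial ℝ) :
    Jv n C (fun k => A k + B k) = Jv n C A + Jv n C B := by
  rw [Jv_comm, Jv_add_left, Jv_comm n A C, Jv_comm n B C]

lemma Jv_abs_le {n : ℕ} (hn : 0 < n) (A B : ℕ → Polynomial ℝ) :
    |Jv n A B| ≤ Real.sqrt (Jv n A A) * Real.sqrt (Jv n B B) := by
  have per : ∀ k ∈ Finset.range n,
      |∫ x in kt n k..kt n (k+1), (A k).eval x * (B k).eval x|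
        ≤ Real.sqrt (∫ x in kt n k..kt n (k+1), ((A k).eval x) ^ 2)
          * Real.sqrt (∫ x in kt n k..kt n (k+1), ((B k).eval x) ^ 2) := by
    intro k _
    have cs := integral_cs (kt_le hn k) (fun x => (A k).eval x) (fun x => (B k).eval x)
      (A k).continuous_aeval (B k).continuous_aeval
    have h1 : 0 ≤ ∫ x in kt n k..kt n (k+1), ((A k).eval x) ^ 2 :=
      intervalIntegral.integral_nonneg (kt_le hn k) (fun x _ => sq_nonneg _)
    have := Real.sqrt_le_sqrt cs
    rwa [Real.sqrt_sq_eq_abs, Real.sqrt_mul h1] at this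
  calc |Jv n A B| ≤ ∑ k ∈ Finset.range n,
        |∫ x in kt n k..kt n (k+1), (A k).eval x * (B k).eval x| :=
        Finset.abs_sum_le_sum_abs _ _
    _ ≤ ∑ k ∈ Finset.range n,
        Real.sqrt (∫ x in kt n k..kt n (k+1), ((A k).eval x) ^ 2)
          * Real.sqrt (∫ x in kt n k..kt n (k+1), ((B k).eval x) ^ 2) :=
        Finset.sum_le_sum per
    _ ≤ Real.sqrt (∑ k ∈ Finset.range n, ∫ x in kt n k..kt n (k+1), ((A k).eval x) ^ 2)
          * Real.sqrt (∑ k ∈ Finset.range n, ∫ x in kt n k..kt n (k+1), ((B k).eval x) ^ 2) :=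
        sum_sqrt_mul_le _ _ _
          (fun k _ => intervalIntegral.integral_nonneg (kt_le hn k) (fun x _ => sq_nonneg _))
          (fun k _ => intervalIntegral.integral_nonneg (kt_le hn k) (fun x _ => sq_nonneg _))
    _ = Real.sqrt (Jv n A A) * Real.sqrt (Jv n B B) := by rw [← Jv_self, ← Jv_self]

lemma elem_ibp (a b : ℝ) (q r : Polynomial ℝ) :
    ∫ x in a..b, (derivative q).eval x * (derivative r).eval x
      = (derivative q).eval b * r.eval b - (derivative q).eval a * r.eval a
        - ∫ x in a..b, (derivative (derivative q)).eval x * r.eval x := by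
  set s : Polynomial ℝ := derivative q * r with hs
  have h1 : ∀ x ∈ Set.uIcc a b, DifferentiableAt ℝ (fun y => s.eval y) x :=
    fun x _ => (s.hasDerivAt x).differentiableAt
  have h2 : IntervalIntegrable (deriv fun y => s.eval y) volume a b := by
    have : (deriv fun y => s.eval y) = fun y => (derivative s).eval y := by
      funext y; exact Polynomial.deriv s
    rw [this]
    exact ((derivative s).continuous_aeval).intervalIntegrable a b
  have h3 := intervalIntegral.integral_deriv_eq_sub h1 h2
  have h4 : ∀ y, deriv (fun y => s.eval y) y
      = (derivative (derivative q)).eval y * r.eval y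
        + (derivative q).eval y * (derivative r).eval y := by
    intro y
    rw [Polynomial.deriv s, hs, derivative_mul]
    simp [eval_add, eval_mul]
  have h5 : (∫ y in a..b, deriv (fun y => s.eval y) y)
      = (∫ y in a..b, (derivative (derivative q)).eval y * r.eval y)
        + ∫ y in a..b, (derivative q).eval y * (derivative r).eval y := by
    rw [show (fun y => deriv (fun y => s.eval y) y) = fun y =>
        ((derivative (derivative q)).eval y * r.eval y
          + (derivative q).eval y * (derivative r).eval y) from funext h4]
    exact intervalIntegral.integral_add (pint _ _ _ _) (pint _ _ _ _)
  rw [h5] at h3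
  have h6 : s.eval b = (derivative q).eval b * r.eval b := by rw [hs]; simp [eval_mul]
  have h7 : s.eval a = (derivative q).eval a * r.eval a := by rw [hs]; simp [eval_mul]
  rw [h6, h7] at h3
  linarith

/-- IBP with telescoping for systems. `Q` is differentiated twice. -/
lemma Jv_ibp {n : ℕ} (hn : 0 < n) (Q R : ℕ → Polynomial ℝ)
    (hQm : ∀ k, k + 1 < n →
      (derivative (Q k)).eval (kt n (k+1)) = (derivative (Q (k+1))).eval (kt n (k+1)))
    (hRm : ∀ k, k + 1 < n → (R k).eval (kt n (k+1)) = (R (k+1)).eval (kt n (k+1)))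
    (hb0 : (derivative (Q 0)).eval 0 * (R 0).eval 0 = 0)
    (hb1 : (derivative (Q (n-1))).eval 1 * (R (n-1)).eval 1 = 0) :
    Jv n (DD Q) (DD R) = - Jv n (DD (DD Q)) R := by
  set G : ℕ → ℝ := fun k =>
    (derivative (Q (min k (n-1)))).eval (kt n k) * (R (min k (n-1))).eval (kt n k) with hG
  have per : ∀ k ∈ Finset.range n,
      (∫ x in kt n k..kt n (k+1), (DD Q k).eval x * (DD R k).eval x)
        + ∫ x in kt n k..kt n (k+1), (DD (DD Q) k).eval x * (R k).eval x
      = G (k+1) - G k := by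
    intro k hk
    rw [Finset.mem_range] at hk
    have hmk : min k (n-1) = k := by omega
    have e := elem_ibp (kt n k) (kt n (k+1)) (Q k) (R k)
    have hGk : G k = (derivative (Q k)).eval (kt n k) * (R k).eval (kt n k) := by
      rw [hG]; simp only [hmk]
    have hGk1 : G (k+1) = (derivative (Q k)).eval (kt n (k+1)) * (R k).eval (kt n (k+1)) := by
      rcases Nat.lt_or_ge (k+1) n with h | h
      · have hmk1 : min (k+1) (n-1) = k+1 := by omega
        rw [hG]; simp only [hmk1]
        rw [← hQm k h, ← hRm k h]
      · have hk1 : k + 1 = n := by omega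
        have hmk1 : min (k+1) (n-1) = k := by omega
        rw [hG]; simp only [hmk1]
    rw [hGk, hGk1]
    show (∫ x in kt n k..kt n (k+1), (derivative (Q k)).eval x * (derivative (R k)).eval x)
      + (∫ x in kt n k..kt n (k+1), (derivative (derivative (Q k))).eval x * (R k).eval x) = _
    rw [e]; ring
  have tele : Jv n (DD Q) (DD R) + Jv n (DD (DD Q)) R = G n - G 0 := by
    unfold Jv
    rw [← Finset.sum_add_distrib]
    rw [Finset.sum_congr rfl per]
    exact Finset.sum_range_sub G n
  have hGn : G n = 0 := by
    rw [hG]; simp only [min_eq_right (by omega : n - 1 ≤ n)]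
    rw [kt_self hn]
    exact hb1
  have hG0 : G 0 = 0 := by
    rw [hG]; simp only [Nat.min_eq_left (by omega : 0 ≤ n - 1)]
    rw [kt_zero]
    simpa using hb0
  rw [hGn, hG0] at tele
  linarith

lemma elem_base {a b : ℝ} (hab : a < b) {q : Polynomial ℝ} (hq : q.natDegree ≤ 1) :
    (b - a)^2 * ∫ x in a..b, ((derivative q).eval x) ^ 2
      ≤ 12 * ∫ x in a..b, (q.eval x) ^ 2 := by
  have hdeg : q.degree ≤ 1 := Polynomial.degree_le_of_natDegree_le hq
  obtain ⟨c1, c0, hq'⟩ : ∃ c1 c0, q = Polynomial.C c1 * Polynomial.X + Polynomial.C c0 :=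
    ⟨q.coeff 1, q.coeff 0, Polynomial.eq_X_add_C_of_degree_le_one hdeg⟩
  have hd : derivative q = Polynomial.C c1 := by
    rw [hq']; simp
  have hev : ∀ x : ℝ, q.eval x = c1 * x + c0 := by intro x; rw [hq']; simp
  have I1 : (∫ x in a..b, ((derivative q).eval x) ^ 2) = (b - a) * c1 ^ 2 := by
    rw [show (fun x => ((derivative q).eval x)^2) = fun _ : ℝ => c1 ^ 2 from by
      funext x; rw [hd]; simp]
    simp [intervalIntegral.integral_const, smul_eq_mul]
  have I2 : (∫ x in a..b, (q.eval x) ^ 2)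
      = c1^2 * ((b^3 - a^3)/3) + 2*c1*c0 * ((b^2-a^2)/2) + c0^2 * (b-a) := by
    rw [show (fun x => (q.eval x)^2) = fun x : ℝ => c1^2 * x^2 + 2*c1*c0*x + c0^2 from by
      funext x; rw [hev]; ring]
    rw [intervalIntegral.integral_add, intervalIntegral.integral_add,
      intervalIntegral.integral_const_mul, intervalIntegral.integral_const_mul,
      integral_pow, integral_id]
    · simp [intervalIntegral.integral_const, smul_eq_mul]; ring
    · exact (by fun_prop : Continuous fun x : ℝ => c1^2*x^2).intervalIntegrable a b
    · exact (by fun_prop : Continuous fun x : ℝ => 2*c1*c0*x).intervalIntegrable a b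
    · exact ((by fun_prop : Continuous fun x : ℝ => c1^2*x^2).add
        (by fun_prop : Continuous fun x : ℝ => 2*c1*c0*x)).intervalIntegrable a b
    · exact (continuous_const : Continuous fun _ : ℝ => c0^2).intervalIntegrable a b
  rw [I1, I2]
  nlinarith [mul_nonneg (sub_pos.mpr hab).le (sq_nonneg (c0 + c1*(a+b)/2))]

/-- matching of derivatives up to order `m` at interior knots -/
def Matches (n m : ℕ) (Q : ℕ → Polynomial ℝ) : Prop :=
  ∀ j k : ℕ, j ≤ m → k + 1 < n →
    (derivative^[j] (Q k)).eval (kt n (k+1)) = (derivative^[j] (Q (k+1))).eval (kt n (k+1))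

/-- boundary conditions: derivatives of order `< p` congruent to `e` mod 2 vanish at `0` and `1` -/
def BCe (n p e : ℕ) (Q : ℕ → Polynomial ℝ) : Prop :=
  ∀ j : ℕ, j < p → j % 2 = e % 2 →
    (derivative^[j] (Q 0)).eval 0 = 0 ∧ (derivative^[j] (Q (n-1))).eval 1 = 0

def DegLe (p : ℕ) (Q : ℕ → Polynomial ℝ) : Prop := ∀ k, (Q k).natDegree ≤ p

lemma Matches.dd {n m : ℕ} {Q : ℕ → Polynomial ℝ} (hm : 1 ≤ m) (h : Matches n m Q) :
    Matches n (m - 1) (DD Q) := by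
  intro j k hj hk
  have : ∀ l : ℕ, derivative^[j] (derivative (Q l)) = derivative^[j+1] (Q l) := by
    intro l; rw [Function.iterate_succ_apply]
  show (derivative^[j] (derivative (Q k))).eval _ = (derivative^[j] (derivative (Q (k+1)))).eval _
  rw [this, this]
  exact h (j+1) k (by omega) hk

lemma BCe.dd {n p e : ℕ} {Q : ℕ → Polynomial ℝ} (h : BCe n p e Q) :
    BCe n (p - 1) (e + 1) (DD Q) := by
  intro j hj hje
  have e1 : ∀ l : ℕ, derivative^[j] (derivative (Q l)) = derivative^[j+1] (Q l) := by
    intro l; rw [Function.iterate_succ_apply]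
  show (derivative^[j] (derivative (Q 0))).eval _ = 0 ∧
    (derivative^[j] (derivative (Q (n-1)))).eval _ = 0
  rw [e1, e1]
  exact h (j+1) (by omega) (by omega)

lemma DegLe.dd {p : ℕ} {Q : ℕ → Polynomial ℝ} (h : DegLe p Q) : DegLe (p - 1) (DD Q) := by
  intro k
  exact le_trans (Polynomial.natDegree_derivative_le (Q k)) (by
    have := h k; omega)

/-- base case: degree ≤ 1 systems satisfy the inverse inequality -/
lemma inv_base {n : ℕ} (hn : 0 < n) {Q : ℕ → Polynomial ℝ} (hQ : DegLe 1 Q) :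
    Jv n (DD Q) (DD Q) ≤ 12 * (n:ℝ)^2 * Jv n Q Q := by
  rw [Jv_self, Jv_self]
  rw [Finset.mul_sum]
  apply Finset.sum_le_sum
  intro k _
  have hlen : kt n (k+1) - kt n k = 1 / n := by
    unfold kt
    have hn' : (n:ℝ) ≠ 0 := Nat.cast_ne_zero.mpr hn.ne'
    push_cast
    field_simp
    ring
  have hab : kt n k < kt n (k+1) := kt_lt hn k
  have h := elem_base hab (hQ k)
  rw [hlen] at h
  have hn' : (0:ℝ) < n := by exact_mod_cast hn
  show (∫ x in kt n k..kt n (k+1), ((DD Q k).eval x) ^ 2) ≤ _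
  have h2 : (1/(n:ℝ))^2 * ∫ x in kt n k..kt n (k+1), ((derivative (Q k)).eval x) ^ 2
      ≤ 12 * ∫ x in kt n k..kt n (k+1), ((Q k).eval x) ^ 2 := h
  have h3 : 0 < (1/(n:ℝ))^2 := by positivity
  calc (∫ x in kt n k..kt n (k+1), ((DD Q k).eval x) ^ 2)
      = (1/(n:ℝ))^2 * (∫ x in kt n k..kt n (k+1), ((derivative (Q k)).eval x) ^ 2) * (n:ℝ)^2 := by
        show (∫ x in kt n k..kt n (k+1), ((derivative (Q k)).eval x) ^ 2) = _
        field_simp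
    _ ≤ (12 * ∫ x in kt n k..kt n (k+1), ((Q k).eval x) ^ 2) * (n:ℝ)^2 := by
        apply mul_le_mul_of_nonneg_right h (by positivity)
    _ = 12 * (n:ℝ)^2 * ∫ x in kt n k..kt n (k+1), ((Q k).eval x) ^ 2 := by ring

/-- robust inverse inequality for polynomial spline systems with parity boundary conditions -/
lemma inv_ineq {n : ℕ} (hn : 0 < n) :
    ∀ p : ℕ, 1 ≤ p → ∀ e : ℕ, ∀ Q : ℕ → Polynomial ℝ,
      DegLe p Q → Matches n (p-1) Q → BCe n p e Q →
      Jv n (DD Q) (DD Q) ≤ 12 * (n:ℝ)^2 * Jv n Q Q := by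
  intro p hp1
  induction p, hp1 using Nat.le_induction with
  | base => intro e Q hdeg _ _; exact inv_base hn hdeg
  | succ p hp IH =>
    intro e Q hdeg hm hbc
    have hm' : Matches n p Q := by simpa using hm
    have hQm : ∀ k, k + 1 < n →
        (derivative (Q k)).eval (kt n (k+1)) = (derivative (Q (k+1))).eval (kt n (k+1)) := by
      intro k hk
      have := hm' 1 k (by omega) hk
      simpa using this
    have hRm : ∀ k, k + 1 < n → (Q k).eval (kt n (k+1)) = (Q (k+1)).eval (kt n (k+1)) := by
      intro k hk
      have := hm' 0 k (by omega) hk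
      simpa using this
    have hb : (derivative (Q 0)).eval 0 * (Q 0).eval 0 = 0 ∧
        (derivative (Q (n-1))).eval 1 * (Q (n-1)).eval 1 = 0 := by
      rcases Nat.mod_two_eq_zero_or_one e with he | he
      · have h0 := hbc 0 (by omega) (by simpa using he.symm)
        simp only [Function.iterate_zero_apply] at h0
        exact ⟨by rw [h0.1, mul_zero], by rw [h0.2, mul_zero]⟩
      · have h1 := hbc 1 (by omega) (by simpa using he.symm)
        simp only [Function.iterate_one] at h1
        exact ⟨by rw [h1.1, zero_mul], by rw [h1.2, zero_mul]⟩
    have hibp : Jv n (DD Q) (DD Q) = - Jv n (DD (DD Q)) Q := Jv_ibp hn Q Q hQm hRm hb.1 hb.2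
    -- apply IH to DD Q
    have hIH : Jv n (DD (DD Q)) (DD (DD Q)) ≤ 12 * (n:ℝ)^2 * Jv n (DD Q) (DD Q) := by
      apply IH (e+1) (DD Q)
      · have := hdeg.dd; simpa using this
      · have := hm'.dd (m := p) hp; exact this
      · have := hbc.dd; simpa using this
    have hcs := Jv_abs_le hn (DD (DD Q)) Q
    set X := Jv n (DD Q) (DD Q) with hX
    set Y := Jv n Q Q with hY
    have hXnn : 0 ≤ X := Jv_nonneg hn _
    have hYnn : 0 ≤ Y := Jv_nonneg hn _
    have hchain : X ≤ Real.sqrt (12 * (n:ℝ)^2 * X) * Real.sqrt Y := by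
      calc X = - Jv n (DD (DD Q)) Q := hibp
        _ ≤ |Jv n (DD (DD Q)) Q| := neg_le_abs _
        _ ≤ Real.sqrt (Jv n (DD (DD Q)) (DD (DD Q))) * Real.sqrt Y := hcs
        _ ≤ Real.sqrt (12 * (n:ℝ)^2 * X) * Real.sqrt Y := by
            apply mul_le_mul_of_nonneg_right (Real.sqrt_le_sqrt hIH) (Real.sqrt_nonneg _)
    have hc : (0:ℝ) ≤ 12 * (n:ℝ)^2 := by positivity
    rw [Real.sqrt_mul hc] at hchain
    set c := Real.sqrt (12 * (n:ℝ)^2) with hcdef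
    set x := Real.sqrt X with hxdef
    set y := Real.sqrt Y with hydef
    have hx2 : x ^ 2 = X := Real.sq_sqrt hXnn
    have hy2 : y ^ 2 = Y := Real.sq_sqrt hYnn
    have hc2 : c ^ 2 = 12 * (n:ℝ)^2 := Real.sq_sqrt hc
    have hxnn : 0 ≤ x := Real.sqrt_nonneg _
    have hynn : 0 ≤ y := Real.sqrt_nonneg _
    have hcnn : 0 ≤ c := Real.sqrt_nonneg _
    -- X ≤ c * x * y with x² = X: conclude X ≤ c² y²
    have : x^2 ≤ c * x * y := by rw [hx2]; linarith [hchain]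
    nlinarith [sq_nonneg (c*y - x), this]

set_option maxHeartbeats 1000000 in
/-- Polynomial-level main estimate: for a spline system `Q` and a "tilde" system `R`,
with `Z = Q - R`,
`‖u‖² + |u|² ≤ 25 n² ‖u‖² + 25 (‖z‖² + |z|²)`. -/
lemma poly_main {n p : ℕ} (hn : 0 < n) (hp : 1 ≤ p) (hn1 : 1 ≤ (n:ℝ))
    (Q R : ℕ → Polynomial ℝ)
    (hQdeg : DegLe p Q) (hQm : Matches n 0 Q)
    (hRdeg : DegLe p R) (hRm : Matches n (p-1) R) (hRbc : BCe n p 1 R) :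
    Jv n Q Q + Jv n (DD Q) (DD Q)
      ≤ 25 * (n:ℝ)^2 * Jv n Q Q
        + 25 * (Jv n (fun k => Q k - R k) (fun k => Q k - R k)
            + Jv n (DD (fun k => Q k - R k)) (DD (fun k => Q k - R k))) := by
  set Z : ℕ → Polynomial ℝ := fun k => Q k - R k with hZ
  set Y := Jv n Q Q with hY
  set NDU := Jv n (DD Q) (DD Q) with hNDU
  set NDV := Jv n (DD R) (DD R) with hNDV
  set NZ := Jv n Z Z with hNZ
  set NDZ := Jv n (DD Z) (DD Z) with hNDZ
  have hYnn : 0 ≤ Y := Jv_nonneg hn _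
  have hNZnn : 0 ≤ NZ := Jv_nonneg hn _
  have hNDZnn : 0 ≤ NDZ := Jv_nonneg hn _
  have hNDVnn : 0 ≤ NDV := Jv_nonneg hn _
  have hsplit : ∀ A : ℕ → Polynomial ℝ, (fun k => DD R k + DD Z k) = DD Q → True := fun _ _ => trivial
  have hDQ : DD Q = fun k => DD R k + DD Z k := by
    funext k
    show derivative (Q k) = derivative (R k) + derivative (Q k - R k)
    rw [derivative_sub]; ring
  rcases Nat.lt_or_ge p 2 with hp1 | hp2
  · -- p = 1 : direct inverse inequality on Q
    have hdeg1 : DegLe 1 Q := by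
      intro k; have := hQdeg k; omega
    have h1 : NDU ≤ 12 * (n:ℝ)^2 * Y := inv_base hn hdeg1
    have h2 : Y ≤ (n:ℝ)^2 * Y := by
      nlinarith [mul_nonneg (by nlinarith : (0:ℝ) ≤ (n:ℝ)^2 - 1) hYnn]
    have h3 : (0:ℝ) ≤ (n:ℝ)^2 * Y := by positivity
    linarith
  · -- p ≥ 2
    -- f2 : IBP for Jv (DD R) (DD Q)
    have hRm1 : ∀ k, k + 1 < n →
        (derivative (R k)).eval (kt n (k+1)) = (derivative (R (k+1))).eval (kt n (k+1)) := by
      intro k hk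
      have := hRm 1 k (by omega) hk
      simpa using this
    have hQm0 : ∀ k, k + 1 < n → (Q k).eval (kt n (k+1)) = (Q (k+1)).eval (kt n (k+1)) := by
      intro k hk
      have := hQm 0 k (by omega) hk
      simpa using this
    have hbR := hRbc 1 (by omega) (by omega)
    simp only [Function.iterate_one] at hbR
    have f2 : Jv n (DD R) (DD Q) = - Jv n (DD (DD R)) Q :=
      Jv_ibp hn R Q hRm1 hQm0 (by rw [hbR.1, zero_mul]) (by rw [hbR.2, zero_mul])
    -- f4 : inverse inequality for DD R
    have f4 : Jv n (DD (DD R)) (DD (DD R)) ≤ 12 * (n:ℝ)^2 * NDV := by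
      apply inv_ineq hn (p-1) (by omega) 2 (DD R)
      · have := hRdeg.dd; exact this
      · have := hRm.dd (m := p-1) (by omega); exact this
      · have := hRbc.dd; simpa using this
    -- f1 : decomposition
    have f1 : Jv n (DD R) (DD Q) = NDV + Jv n (DD R) (DD Z) := by
      rw [hDQ, Jv_add_right]
    -- f3/f5 : CS bounds
    have f3 := Jv_abs_le hn (DD (DD R)) Q
    have f5 := Jv_abs_le hn (DD R) (DD Z)
    -- f6 : expansion of NDU
    have f6 : NDU = NDV + 2 * Jv n (DD R) (DD Z) + NDZ := by
      rw [hNDU, hDQ, Jv_add_left, Jv_add_right, Jv_add_right,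
        Jv_comm n (DD Z) (DD R)]
      ring
    set x := Real.sqrt NDV with hxd
    set y := Real.sqrt Y with hyd
    set z := Real.sqrt NDZ with hzd
    set c := Real.sqrt (12 * (n:ℝ)^2) with hcd
    have hx2 : x^2 = NDV := Real.sq_sqrt hNDVnn
    have hy2 : y^2 = Y := Real.sq_sqrt hYnn
    have hz2 : z^2 = NDZ := Real.sq_sqrt hNDZnn
    have hc2 : c^2 = 12*(n:ℝ)^2 := Real.sq_sqrt (by positivity)
    have hxnn : 0 ≤ x := Real.sqrt_nonneg _
    have hynn : 0 ≤ y := Real.sqrt_nonneg _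
    have hznn : 0 ≤ z := Real.sqrt_nonneg _
    have hcnn : 0 ≤ c := Real.sqrt_nonneg _
    -- |Jv (DDDDR) Q| ≤ c x y
    have g3 : |Jv n (DD (DD R)) Q| ≤ c * x * y := by
      calc |Jv n (DD (DD R)) Q|
          ≤ Real.sqrt (Jv n (DD (DD R)) (DD (DD R))) * Real.sqrt Y := f3
        _ ≤ Real.sqrt (12*(n:ℝ)^2 * NDV) * Real.sqrt Y :=
            mul_le_mul_of_nonneg_right (Real.sqrt_le_sqrt f4) (Real.sqrt_nonneg _)
        _ = c * x * y := by rw [Real.sqrt_mul (by positivity)]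
    have g5 : |Jv n (DD R) (DD Z)| ≤ x * z := f5
    -- key : x² ≤ c x y + x z
    have key : x^2 ≤ c*x*y + x*z := by
      have : NDV ≤ |Jv n (DD (DD R)) Q| + |Jv n (DD R) (DD Z)| := by
        have : NDV = - Jv n (DD (DD R)) Q - Jv n (DD R) (DD Z) := by
          rw [← f2, f1]; ring
        rw [this]
        have a1 := neg_le_abs (Jv n (DD (DD R)) Q)
        have a2 := neg_le_abs (Jv n (DD R) (DD Z))
        linarith
      rw [hx2]
      linarith [g3, g5]
    -- x ≤ c y + z
    have hxb : x ≤ c*y + z := by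
      rcases eq_or_lt_of_le hxnn with h0 | hpos
      · rw [← h0]; positivity
      · nlinarith [key]
    -- NDU bound
    have g6 : NDU ≤ (x + z)^2 := by
      have hj : Jv n (DD R) (DD Z) ≤ x*z := le_trans (le_abs_self _) g5
      have e : (x+z)^2 = x^2 + 2*(x*z) + z^2 := by ring
      rw [e, hx2, hz2]
      linarith [f6, hj]
    have g7 : NDU ≤ (c*y + 2*z)^2 := by
      have h1 : x + z ≤ c*y + 2*z := by linarith
      have h2 : (x+z)^2 ≤ (c*y+2*z)^2 := by
        apply pow_le_pow_left₀ (by positivity) h1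
      linarith
    -- conclude
    have hY' : Y ≤ (n:ℝ)^2 * Y := by
      nlinarith [mul_nonneg (by nlinarith : (0:ℝ) ≤ (n:ℝ)^2 - 1) hYnn]
    have g8 : NDU ≤ 2*c^2*y^2 + 8*z^2 := by nlinarith [g7, sq_nonneg (c*y - 2*z)]
    rw [hc2, hy2, hz2] at g8
    linarith [g8, hY', hNZnn, hNDZnn]

lemma kt_nonneg (n k : ℕ) : 0 ≤ kt n k := by unfold kt; positivity

lemma kt_le_one {n k : ℕ} (hn : 0 < n) (hk : k ≤ n) : kt n k ≤ 1 := by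
  unfold kt
  rw [div_le_one (by exact_mod_cast hn)]
  exact_mod_cast hk

lemma kt_sub {n : ℕ} (hn : 0 < n) (k : ℕ) (hk : k < n) :
    Set.Icc (kt n k) (kt n (k+1)) ⊆ Set.Icc 0 1 :=
  fun x hx => ⟨le_trans (kt_nonneg n k) hx.1, le_trans hx.2 (kt_le_one hn (by omega))⟩

/-- a continuous-within function agreeing with a continuous function on an open
interval agrees at a closure point -/
lemma closure_val {g P : ℝ → ℝ} {a b t : ℝ} (ht : t ∈ closure (Set.Ioo a b))
    (hg : ContinuousWithinAt g (Set.Icc 0 1) t) (hsub : Set.Ioo a b ⊆ Set.Icc 0 1)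
    (hP : Continuous P) (heq : ∀ x ∈ Set.Ioo a b, g x = P x) : g t = P t := by
  have hne : (nhdsWithin t (Set.Ioo a b)).NeBot := mem_closure_iff_nhdsWithin_neBot.mp ht
  have h1 : Filter.Tendsto g (nhdsWithin t (Set.Ioo a b)) (nhds (g t)) := hg.mono hsub
  have h2 : Filter.Tendsto P (nhdsWithin t (Set.Ioo a b)) (nhds (P t)) :=
    (hP.continuousAt).continuousWithinAt
  have hev : g =ᶠ[nhdsWithin t (Set.Ioo a b)] P :=
    Filter.eventuallyEq_of_mem self_mem_nhdsWithin heq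
  exact tendsto_nhds_unique h1 (h2.congr' hev.symm)

lemma polyIter (q : Polynomial ℝ) :
    ∀ j : ℕ, iteratedDeriv j (fun y : ℝ => q.eval y) = fun y => (derivative^[j] q).eval y := by
  intro j
  induction j with
  | zero => simp [iteratedDeriv_zero]
  | succ j IH =>
    rw [iteratedDeriv_succ, IH]
    funext y
    rw [Function.iterate_succ_apply']
    exact Polynomial.deriv _

/-- iterated derivative within `Icc 0 1` at interior points of a polynomial piece -/
lemma interior_ideriv {u : ℝ → ℝ} {q : Polynomial ℝ} {a b : ℝ}
    (hsub : Set.Icc a b ⊆ Set.Icc 0 1) (heq : ∀ x ∈ Set.Icc a b, u x = q.eval x)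
    (j : ℕ) {x : ℝ} (hx : x ∈ Set.Ioo a b) :
    iteratedDerivWithin j u (Set.Icc 0 1) x = (derivative^[j] q).eval x := by
  have hnb : Set.Icc a b ∈ nhds x := Icc_mem_nhds hx.1 hx.2
  have hev : u =ᶠ[nhds x] fun y => q.eval y := Filter.eventuallyEq_of_mem hnb heq
  have huniv : Set.Icc (0:ℝ) 1 =ᶠ[nhds x] (Set.univ : Set ℝ) :=
    Filter.eventuallyEq_univ.mpr (Filter.mem_of_superset hnb hsub)
  have step1 : iteratedDerivWithin j u (Set.Icc 0 1) x = iteratedDeriv j u x := by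
    rw [iteratedDerivWithin, iteratedDeriv_eq_iteratedFDeriv]
    rw [iteratedFDerivWithin_congr_set huniv j, iteratedFDerivWithin_univ]
  rw [step1, hev.iteratedDeriv_eq j, polyIter]

/-- values of iterated derivatives at the knots -/
lemma knot_vals {m n : ℕ} (hn : 0 < n) {u : ℝ → ℝ}
    (hu : ContDiffOn ℝ (m : ℕ) u (Set.Icc 0 1))
    (Q : ℕ → Polynomial ℝ)
    (hQ : ∀ k, k < n → ∀ x ∈ Set.Icc (kt n k) (kt n (k+1)), u x = (Q k).eval x)
    {j : ℕ} (hj : j ≤ m) {k : ℕ} (hk : k < n) :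
    iteratedDerivWithin j u (Set.Icc 0 1) (kt n k) = (derivative^[j] (Q k)).eval (kt n k) ∧
    iteratedDerivWithin j u (Set.Icc 0 1) (kt n (k+1))
      = (derivative^[j] (Q k)).eval (kt n (k+1)) := by
  have hg : ContinuousOn (iteratedDerivWithin j u (Set.Icc 0 1)) (Set.Icc 0 1) :=
    hu.continuousOn_iteratedDerivWithin (by exact_mod_cast hj) (uniqueDiffOn_Icc zero_lt_one)
  have hsub := kt_sub hn k hk
  have hsubo : Set.Ioo (kt n k) (kt n (k+1)) ⊆ Set.Icc 0 1 :=
    fun x hx => hsub (Set.Ioo_subset_Icc_self hx)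
  have hint : ∀ x ∈ Set.Ioo (kt n k) (kt n (k+1)),
      iteratedDerivWithin j u (Set.Icc 0 1) x = (derivative^[j] (Q k)).eval x :=
    fun x hx => interior_ideriv hsub (hQ k hk) j hx
  have hcl : closure (Set.Ioo (kt n k) (kt n (k+1))) = Set.Icc (kt n k) (kt n (k+1)) :=
    closure_Ioo (kt_lt hn k).ne
  have hP : Continuous fun y : ℝ => (derivative^[j] (Q k)).eval y := Polynomial.continuous_aeval _
  constructor
  · exact closure_val (by rw [hcl]; exact Set.left_mem_Icc.mpr (kt_le hn k))
      (hg _ (hsub (Set.left_mem_Icc.mpr (kt_le hn k)))) hsubo hP hint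
  · exact closure_val (by rw [hcl]; exact Set.right_mem_Icc.mpr (kt_le hn k))
      (hg _ (hsub (Set.right_mem_Icc.mpr (kt_le hn k)))) hsubo hP hint

/-- L² norm of a piecewise-polynomial function as a sum over elements -/
lemma L2sq_eq {n : ℕ} (hn : 0 < n) {u : ℝ → ℝ} (Q : ℕ → Polynomial ℝ)
    (hQ : ∀ k, k < n → ∀ x ∈ Set.Icc (kt n k) (kt n (k+1)), u x = (Q k).eval x) :
    (∫ x in (0:ℝ)..1, u x ^ 2) = Jv n Q Q := by
  have hint : ∀ k < n, IntervalIntegrable (fun x => u x ^ 2) volume (kt n k) (kt n (k+1)) := by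
    intro k hk
    apply ContinuousOn.intervalIntegrable
    apply ContinuousOn.congr (((Polynomial.continuous (Q k)).pow 2).continuousOn)
    intro x hx
    rw [Set.uIcc_of_le (kt_le hn k)] at hx
    show u x ^ 2 = ((Q k).eval x) ^ 2
    rw [hQ k hk x hx]
  have hsplit := intervalIntegral.sum_integral_adjacent_intervals (a := kt n) (μ := volume) hint
  rw [kt_zero, kt_self hn] at hsplit
  rw [← hsplit, Jv_self]
  refine Finset.sum_congr rfl (fun k hk => ?_)
  rw [Finset.mem_range] at hk
  refine intervalIntegral.integral_congr (fun x hx => ?_)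
  rw [Set.uIcc_of_le (kt_le hn k)] at hx
  show u x ^ 2 = ((Q k).eval x) ^ 2
  rw [hQ k hk x hx]

/-- H¹ seminorm of a piecewise-polynomial function as a sum over elements -/
lemma H1semisq_eq {n : ℕ} (hn : 0 < n) {u : ℝ → ℝ} (Q : ℕ → Polynomial ℝ)
    (hQ : ∀ k, k < n → ∀ x ∈ Set.Icc (kt n k) (kt n (k+1)), u x = (Q k).eval x) :
    (∫ x in (0:ℝ)..1, deriv u x ^ 2) = Jv n (DD Q) (DD Q) := by
  have hderiv : ∀ k, k < n → ∀ x ∈ Set.Ioo (kt n k) (kt n (k+1)),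
      deriv u x = (derivative (Q k)).eval x := by
    intro k hk x hx
    have hnb : Set.Icc (kt n k) (kt n (k+1)) ∈ nhds x := Icc_mem_nhds hx.1 hx.2
    have hev : u =ᶠ[nhds x] fun y => (Q k).eval y :=
      Filter.eventuallyEq_of_mem hnb (hQ k hk)
    rw [hev.deriv_eq, Polynomial.deriv]
  have hae : ∀ k, k < n → (∀ᵐ x ∂(volume : Measure ℝ),
      x ∈ Set.uIoc (kt n k) (kt n (k+1)) → deriv u x ^ 2 = ((derivative (Q k)).eval x) ^ 2) := by
    intro k hk
    have h1 : ∀ᵐ x : ℝ ∂volume, x ≠ kt n (k+1) := by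
      refine MeasureTheory.ae_iff.mpr ?_
      simpa using Real.volume_singleton
    filter_upwards [h1] with x hx1 hx2
    rw [Set.uIoc_of_le (kt_le hn k)] at hx2
    have hxo : x ∈ Set.Ioo (kt n k) (kt n (k+1)) := ⟨hx2.1, lt_of_le_of_ne hx2.2 hx1⟩
    rw [hderiv k hk x hxo]
  have hint : ∀ k < n,
      IntervalIntegrable (fun x => deriv u x ^ 2) volume (kt n k) (kt n (k+1)) := by
    intro k hk
    have hpoly : IntervalIntegrable (fun x => ((derivative (Q k)).eval x) ^ 2) volume
        (kt n k) (kt n (k+1)) :=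
      ((Polynomial.continuous (derivative (Q k))).pow 2).intervalIntegrable _ _
    apply hpoly.congr_ae
    rw [Filter.EventuallyEq]
    refine (MeasureTheory.ae_restrict_iff' measurableSet_uIoc).mpr ?_
    filter_upwards [hae k hk] with x hx1 hx2
    exact (hx1 hx2).symm
  have hsplit := intervalIntegral.sum_integral_adjacent_intervals (a := kt n) (μ := volume) hint
  rw [kt_zero, kt_self hn] at hsplit
  rw [← hsplit, Jv_self]
  refine Finset.sum_congr rfl (fun k hk => ?_)
  rw [Finset.mem_range] at hk
  exact intervalIntegral.integral_congr_ae (hae k hk)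

/-- extract the polynomial system of a spline -/
lemma extract {p n : ℕ} (hn : 0 < n) {u : ℝ → ℝ} (hu : IsSpline p n u) :
    ∃ Q : ℕ → Polynomial ℝ, DegLe p Q ∧
      (∀ k, k < n → ∀ x ∈ Set.Icc (kt n k) (kt n (k+1)), u x = (Q k).eval x) ∧
      Matches n (p-1) Q ∧
      (∀ j : ℕ, j ≤ p - 1 → ∀ k, k < n →
        iteratedDerivWithin j u (Set.Icc 0 1) (kt n k) = (derivative^[j] (Q k)).eval (kt n k) ∧
        iteratedDerivWithin j u (Set.Icc 0 1) (kt n (k+1))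
          = (derivative^[j] (Q k)).eval (kt n (k+1))) := by
  have hQex : ∀ k : ℕ, k < n → ∃ q : Polynomial ℝ, q.natDegree ≤ p ∧
      ∀ x ∈ Set.Icc (kt n k) (kt n (k+1)), u x = q.eval x := by
    intro k hk
    obtain ⟨q, h1, h2⟩ := hu.2 (k+1) (by omega) (by omega)
    refine ⟨q, h1, fun x hx => h2 x ?_⟩
    have e1 : ((↑(k+1):ℝ) - 1) / n = kt n k := by unfold kt; push_cast; ring
    have e2 : ((↑(k+1):ℝ)) / n = kt n (k+1) := by unfold kt; push_cast; ring
    rw [e1, e2]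
    exact hx
  classical
  set Q : ℕ → Polynomial ℝ := fun k => if h : k < n then Classical.choose (hQex k h) else 0
    with hQdef
  have hQspec : ∀ k (h : k < n), (Q k).natDegree ≤ p ∧
      ∀ x ∈ Set.Icc (kt n k) (kt n (k+1)), u x = (Q k).eval x := by
    intro k h
    have := Classical.choose_spec (hQex k h)
    simpa [hQdef, h] using this
  have hpieces : ∀ k, k < n → ∀ x ∈ Set.Icc (kt n k) (kt n (k+1)), u x = (Q k).eval x :=
    fun k h => (hQspec k h).2
  have hdeg : DegLe p Q := by
    intro k
    by_cases h : k < n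
    · exact (hQspec k h).1
    · simp [hQdef, h]
  have hkv := fun (j : ℕ) (hj : j ≤ p - 1) (k : ℕ) (hk : k < n) =>
    knot_vals (m := p - 1) hn hu.1 Q hpieces hj hk
  refine ⟨Q, hdeg, hpieces, ?_, hkv⟩
  intro j k hj hk
  have h1 := (hkv j hj k (by omega)).2
  have h2 := (hkv j hj (k+1) hk).1
  rw [← h1, ← h2]

/-- per-element main estimate at the level of functions -/
lemma perv {p n : ℕ} (hp : 1 ≤ p) (hpn : p < n) (u v : ℝ → ℝ)
    (hu : IsSpline p n u) (hv : IsSplineTilde p n v) :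
    H1sq u ≤ 25 * ((n:ℝ)^2 * L2sq u + H1sq (fun x => u x - v x)) := by
  have hn : 0 < n := by omega
  have hn1 : 1 ≤ (n:ℝ) := by exact_mod_cast hn
  obtain ⟨Q, hQdeg, hQp, hQm, _⟩ := extract hn hu
  obtain ⟨R, hRdeg, hRp, hRm, hRkv⟩ := extract hn hv.1
  -- boundary conditions for R
  have hRbc : BCe n p 1 R := by
    intro j hjp hje
    obtain ⟨l, rfl⟩ : ∃ l, j = 2*l+1 := ⟨j/2, by omega⟩
    have hbv := hv.2 l hjp
    have hj1 : 2*l+1 ≤ p - 1 := by omega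
    have h0 := (hRkv (2*l+1) hj1 0 hn).1
    have h1 := (hRkv (2*l+1) hj1 (n-1) (by omega)).2
    rw [kt_zero] at h0
    rw [show n - 1 + 1 = n from by omega, kt_self hn] at h1
    exact ⟨by rw [← h0, hbv.1], by rw [← h1, hbv.2]⟩
  have hQm0 : Matches n 0 Q := fun j k hj hk => hQm j k (by omega) hk
  -- the difference system
  set Z : ℕ → Polynomial ℝ := fun k => Q k - R k with hZdef
  have hZp : ∀ k, k < n → ∀ x ∈ Set.Icc (kt n k) (kt n (k+1)),
      (fun x => u x - v x) x = (Z k).eval x := by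
    intro k hk x hx
    show u x - v x = (Q k - R k).eval x
    rw [Polynomial.eval_sub, hQp k hk x hx, hRp k hk x hx]
  have main := poly_main hn hp hn1 Q R hQdeg hQm0 hRdeg hRm hRbc
  have e1 : L2sq u = Jv n Q Q := L2sq_eq hn Q hQp
  have e2 : H1semisq u = Jv n (DD Q) (DD Q) := H1semisq_eq hn Q hQp
  have e3 : L2sq (fun x => u x - v x) = Jv n Z Z := L2sq_eq hn Z hZp
  have e4 : H1semisq (fun x => u x - v x) = Jv n (DD Z) (DD Z) := H1semisq_eq hn Z hZp
  have e5 : H1sq (fun x => u x - v x) = Jv n Z Z + Jv n (DD Z) (DD Z) := by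
    show L2sq (fun x => u x - v x) + H1semisq (fun x => u x - v x) = _
    rw [e3, e4]
  rw [← hZdef] at main
  show L2sq u + H1semisq u ≤ _
  rw [e1, e2, e5]
  linarith [main]

end SplineAux

/-- robust inverse inequality for the boundary-corrected mass
smoother with an arbitrary subspace `V ⊆ S̃_{p,n}`: there is `C > 0`,
independent of `p` and `n`, with
`‖u‖²_{H¹} ≤ C (n² ‖u‖²_{L²} + inf_{v ∈ V} ‖u−v‖²_{H¹})`
for all `u ∈ S_{p,n}`. -/
theorem stmt11 :
    ∃ C : ℝ, 0 < C ∧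
      ∀ p n : ℕ, 1 ≤ p → p < n →
        ∀ V : Submodule ℝ (ℝ → ℝ), (∀ v ∈ V, IsSplineTilde p n v) →
        ∀ u : ℝ → ℝ, IsSpline p n u →
          H1sq u ≤ C * ((n : ℝ) ^ 2 * L2sq u +
            sInf {t : ℝ | ∃ v ∈ V, t = H1sq (fun x => u x - v x)}) := by
  refine ⟨25, by norm_num, ?_⟩
  intro p n hp hpn V hV u hu
  set S : Set ℝ := {t : ℝ | ∃ v ∈ V, t = H1sq (fun x => u x - v x)} with hS
  have hne : S.Nonempty := ⟨H1sq (fun x => u x - (0 : ℝ → ℝ) x), 0, V.zero_mem, rfl⟩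
  have hlb : ∀ t ∈ S, H1sq u ≤ 25 * ((n:ℝ)^2 * L2sq u + t) := by
    rintro t ⟨v, hvV, rfl⟩
    exact perv hp hpn u v hu (hV v hvV)
  have hinf : H1sq u / 25 - (n:ℝ)^2 * L2sq u ≤ sInf S := by
    apply le_csInf hne
    intro t ht
    have := hlb t ht
    linarith
  linarith
end

section
/- Let M be an SPD n×n real matrix and let K be a symmetric positive semidefinite n×n real matrix. Set 𝓐 := K⊗M + M⊗K + M⊗M and 𝓜 := M⊗M. Then (K+M)⊗(K+M) ≼ 𝓐·𝓜⁻¹·𝓐. -/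
open Matrix Kronecker

open scoped MatrixOrder in
lemma psd_kron {n m : ℕ} {A : Matrix (Fin n) (Fin n) ℝ} {B : Matrix (Fin m) (Fin m) ℝ}
    (hA : A.PosSemidef) (hB : B.PosSemidef) : (A ⊗ₖ B).PosSemidef := by
  obtain ⟨C, rfl⟩ := CStarAlgebra.nonneg_iff_eq_star_mul_self.mp hA.nonneg
  obtain ⟨D, rfl⟩ := CStarAlgebra.nonneg_iff_eq_star_mul_self.mp hB.nonneg
  simp only [star_eq_conjTranspose]
  have hct : (C ⊗ₖ D)ᴴ = Cᴴ ⊗ₖ Dᴴ := by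
    ext ⟨i,j⟩ ⟨k,l⟩
    simp [Matrix.conjTranspose_apply]
  have : (Cᴴ * C) ⊗ₖ (Dᴴ * D) = (C ⊗ₖ D)ᴴ * (C ⊗ₖ D) := by
    rw [hct, Matrix.mul_kronecker_mul]
  rw [this]
  exact Matrix.posSemidef_conjTranspose_mul_self _

/-- with `M` SPD and `K` symmetric positive semidefinite,
`𝓐 = K⊗M + M⊗K + M⊗M` and `𝓜 = M⊗M` satisfy `(K+M)⊗(K+M) ≼ 𝓐 𝓜⁻¹ 𝓐`. -/
theorem stmt14 {n : ℕ} (M K : Matrix (Fin n) (Fin n) ℝ)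
    (hM : M.PosDef) (hK : K.PosSemidef) :
    ((K ⊗ₖ M + M ⊗ₖ K + M ⊗ₖ M) * (M ⊗ₖ M)⁻¹ * (K ⊗ₖ M + M ⊗ₖ K + M ⊗ₖ M)
      - (K + M) ⊗ₖ (K + M)).PosSemidef := by
  have hMdet : IsUnit M.det := isUnit_iff_ne_zero.mpr hM.det_pos.ne'
  have h1 : M * M⁻¹ = 1 := Matrix.mul_nonsing_inv _ hMdet
  have h2 : M⁻¹ * M = 1 := Matrix.nonsing_inv_mul _ hMdet
  have hMinv : M⁻¹.PosSemidef := (hM.inv).posSemidef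
  have key : (K ⊗ₖ M + M ⊗ₖ K + M ⊗ₖ M) * (M ⊗ₖ M)⁻¹ * (K ⊗ₖ M + M ⊗ₖ K + M ⊗ₖ M)
      - (K + M) ⊗ₖ (K + M)
      = (K * M⁻¹ * K) ⊗ₖ M + M ⊗ₖ (K * M⁻¹ * K) + K ⊗ₖ K + K ⊗ₖ M + M ⊗ₖ K := by
    rw [Matrix.inv_kronecker]
    simp only [Matrix.add_mul, Matrix.mul_add, ← Matrix.mul_kronecker_mul, h1, h2,
      Matrix.add_kronecker, Matrix.kronecker_add, mul_assoc,
      Matrix.mul_one, Matrix.one_mul, mul_one, one_mul]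
    abel
  rw [key]
  have hKMK : (K * M⁻¹ * K).PosSemidef := by
    have := hMinv.mul_mul_conjTranspose_same K
    rwa [hK.isHermitian] at this
  exact ((((psd_kron hKMK hM.posSemidef).add (psd_kron hM.posSemidef hKMK)).add
    (psd_kron hK hK)).add (psd_kron hK hM.posSemidef)).add (psd_kron hM.posSemidef hK)
end

section
/- For every integer p ≥ 1 and every integer n > p, there exists a nonzero spline w ∈ S_{p,n} with |w|_{H¹(0,1)} ≥ p·n·‖w‖_{L²(0,1)}. In particular, the inverse inequality |u|_{H¹} ≤ c·n·‖u‖_{L²} cannot hold on the full spline space S_{p,n} with a constant c independent of the spline degree p. -/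
open MeasureTheory

noncomputable def tp (k : ℕ) (t : ℝ) : ℝ := max t 0 ^ k

theorem hasDerivAt_tp (k : ℕ) (hk : k ≠ 0) (t : ℝ) :
    HasDerivAt (tp (k + 1)) (((k : ℝ) + 1) * tp k t) t := by
  rcases lt_trichotomy t 0 with ht | rfl | ht
  · have h0 : HasDerivAt (fun _ : ℝ => (0 : ℝ)) 0 t := hasDerivAt_const t 0
    have he : tp (k + 1) =ᶠ[nhds t] fun _ : ℝ => (0 : ℝ) := by
      filter_upwards [Iio_mem_nhds ht] with s hs
      simp [tp, max_eq_right (le_of_lt (show s < 0 from hs))]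
    have h1 : HasDerivAt (tp (k + 1)) 0 t := h0.congr_of_eventuallyEq he
    have : tp k t = 0 := by simp [tp, max_eq_right ht.le, zero_pow hk]
    rw [this, mul_zero]; exact h1
  · have h0 : HasDerivAt (tp (k + 1)) 0 0 := by
      rw [hasDerivAt_iff_tendsto_slope]
      refine squeeze_zero_norm' (a := fun s : ℝ => |s|) ?_ ?_
      · have hev : ∀ᶠ s : ℝ in nhds (0:ℝ), |s| < 1 := by
          have := eventually_abs_sub_lt (0:ℝ) one_pos
          simpa using this
        filter_upwards [hev.filter_mono nhdsWithin_le_nhds] with s hs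
        rcases le_or_gt s 0 with h | h
        · have h1 : tp (k + 1) s = 0 := by simp [tp, max_eq_right h]
          have h2 : tp (k + 1) 0 = 0 := by simp [tp]
          rw [slope_def_field, h1, h2]
          simp [abs_nonneg]
        · have h1 : tp (k + 1) s = s ^ (k + 1) := by
            simp [tp, max_eq_left h.le]
          have h2 : tp (k + 1) 0 = 0 := by simp [tp]
          rw [slope_def_field, h1, h2]
          have hs0 : s ≠ 0 := ne_of_gt h
          rw [sub_zero, sub_zero, pow_succ, mul_div_assoc, div_self hs0, mul_one]
          have hk1 : 1 ≤ k := Nat.one_le_iff_ne_zero.2 hk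
          have hs1 : s ≤ 1 := le_of_lt (by rwa [abs_of_pos h] at hs)
          have h3 : s ^ k ≤ s ^ 1 := pow_le_pow_of_le_one h.le hs1 hk1
          rw [Real.norm_eq_abs, abs_of_nonneg (pow_nonneg h.le k)]
          simpa [abs_of_pos h] using h3
      · exact (continuous_abs.tendsto' 0 0 abs_zero).mono_left nhdsWithin_le_nhds
    have : tp k 0 = 0 := by simp [tp, zero_pow hk]
    rw [this, mul_zero]; exact h0
  · have h0 : HasDerivAt (fun s : ℝ => s ^ (k + 1)) (((k : ℝ) + 1) * t ^ k) t := by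
      simpa using hasDerivAt_pow (k + 1) t
    have he : tp (k + 1) =ᶠ[nhds t] fun s : ℝ => s ^ (k + 1) := by
      filter_upwards [Ioi_mem_nhds ht] with s hs
      simp [tp, max_eq_left (le_of_lt (show (0:ℝ) < s from hs))]
    have h1 : HasDerivAt (tp (k + 1)) (((k : ℝ) + 1) * t ^ k) t :=
      h0.congr_of_eventuallyEq he
    have : tp k t = t ^ k := by simp [tp, max_eq_left ht.le]
    rw [this]; exact h1

theorem continuous_tp (k : ℕ) : Continuous (tp k) := by
  exact (continuous_id.max continuous_const).pow k

theorem contDiff_tp : ∀ k : ℕ, ContDiff ℝ (k : ℕ) (tp (k + 1))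
  | 0 => by
      rw [Nat.cast_zero, contDiff_zero]
      exact continuous_tp 1
  | (k + 1) => by
      have hd : deriv (tp (k + 2)) = fun t => ((k : ℝ) + 2) * tp (k + 1) t := by
        funext t
        have := (hasDerivAt_tp (k + 1) (Nat.succ_ne_zero k) t).deriv
        rw [this]; push_cast; ring
      rw [show (((k + 1 : ℕ)) : WithTop ℕ∞) = (k : ℕ) + 1 by push_cast; rfl,
        contDiff_succ_iff_deriv]
      refine ⟨fun t => (hasDerivAt_tp (k + 1) (Nat.succ_ne_zero k) t).differentiableAt, by simp, ?_⟩
      rw [hd]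
      simpa [smul_eq_mul] using (contDiff_tp k).const_smul (((k : ℝ) + 2))

theorem tp_of_nonpos {k : ℕ} (hk : k ≠ 0) {t : ℝ} (ht : t ≤ 0) : tp k t = 0 := by
  simp [tp, max_eq_right ht, zero_pow hk]

theorem tp_of_nonneg (k : ℕ) {t : ℝ} (ht : 0 ≤ t) : tp k t = t ^ k := by
  simp [tp, max_eq_left ht]

/-- the inverse inequality fails on the full spline space: for all
`n > p ≥ 1` there is a nonzero spline `w ∈ S_{p,n}` with
`|w|_{H¹(0,1)} ≥ p · n · ‖w‖_{L²(0,1)}`. -/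
theorem stmt18 (p n : ℕ) (hp : 1 ≤ p) (hn : p < n) :
    ∃ w : ℝ → ℝ, IsSpline p n w ∧ (∃ x ∈ Set.Icc (0:ℝ) 1, w x ≠ 0) ∧
      (p : ℝ) * (n : ℝ) * Real.sqrt (L2sq w) ≤ Real.sqrt (H1semisq w) := by
  obtain ⟨m, rfl⟩ : ∃ m, p = m + 1 := ⟨p - 1, by omega⟩
  have hn0 : (0:ℝ) < n := by exact_mod_cast (by omega : 0 < n)
  have hn1 : (1:ℝ) ≤ n := by exact_mod_cast (by omega : 1 ≤ n)
  set c : ℝ := ((n : ℝ) - 1) / n with hc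
  set w : ℝ → ℝ := fun x => tp (m + 1) (x - c) with hw
  have hc0 : 0 ≤ c := div_nonneg (by linarith) hn0.le
  have hc1 : c ≤ 1 := by
    rw [hc, div_le_one hn0]; linarith
  have h1c : 1 - c = 1 / n := by
    rw [hc]; field_simp; ring
  have htpos : 0 < 1 - c := by rw [h1c]; positivity
  -- pointwise description
  have hwle : ∀ x : ℝ, x ≤ c → w x = 0 := fun x hx =>
    tp_of_nonpos (Nat.succ_ne_zero m) (by linarith)
  have hwge : ∀ x : ℝ, c ≤ x → w x = (x - c) ^ (m + 1) := fun x hx =>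
    tp_of_nonneg (m + 1) (by linarith)
  refine ⟨w, ⟨?_, ?_⟩, ⟨1, ⟨by norm_num, le_refl 1⟩, ?_⟩, ?_⟩
  · -- smoothness
    have : ContDiff ℝ (m : ℕ) w :=
      (contDiff_tp m).comp (contDiff_id.sub contDiff_const)
    simpa using this.contDiffOn
  · -- polynomial pieces
    intro i hi1 hi2
    rcases eq_or_lt_of_le hi2 with rfl | hi
    · refine ⟨(Polynomial.X - Polynomial.C c) ^ (m + 1), ?_, ?_⟩
      · rw [Polynomial.natDegree_pow, Polynomial.natDegree_X_sub_C, mul_one]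
      · intro x hx
        have hcx : c ≤ x := by
          rw [hc]; exact hx.1
        rw [hwge x hcx]
        simp [Polynomial.eval_pow]
    · refine ⟨0, by simp, ?_⟩
      intro x hx
      have hxc : x ≤ c := by
        have h1 : (i : ℝ) ≤ (n : ℝ) - 1 := by
          have : (i : ℝ) + 1 ≤ (n : ℝ) := by exact_mod_cast (by omega : i + 1 ≤ n)
          linarith
        have : (i : ℝ) / n ≤ c := by rw [hc]; gcongr
        exact hx.2.trans this
      rw [hwle x hxc]; simp
  · -- nonzero at 1
    rw [hwge 1 hc1]
    positivity
  · -- the inequality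
    have hwcont : Continuous w :=
      (continuous_tp (m + 1)).comp (continuous_id.sub continuous_const)
    -- L2 computation
    have hL2 : L2sq w = (1 - c) ^ ((m + 1) * 2 + 1) / (((m + 1) * 2 : ℕ) + 1 : ℝ) := by
      have hsplit : L2sq w = (∫ x in (0:ℝ)..c, w x ^ 2) + ∫ x in c..(1:ℝ), w x ^ 2 := by
        rw [L2sq]
        exact (intervalIntegral.integral_add_adjacent_intervals
          ((hwcont.pow 2).intervalIntegrable 0 c)
          ((hwcont.pow 2).intervalIntegrable c 1)).symm
      have hleft : (∫ x in (0:ℝ)..c, w x ^ 2) = 0 := by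
        rw [intervalIntegral.integral_congr (g := fun _ => (0:ℝ))
          (fun x hx => by
            rw [Set.uIcc_of_le hc0] at hx
            rw [hwle x hx.2]; norm_num)]
        simp
      have hright : (∫ x in c..(1:ℝ), w x ^ 2)
          = (1 - c) ^ ((m + 1) * 2 + 1) / (((m + 1) * 2 : ℕ) + 1 : ℝ) := by
        rw [intervalIntegral.integral_congr (g := fun x => (x - c) ^ ((m + 1) * 2))
          (fun x hx => by
            rw [Set.uIcc_of_le hc1] at hx
            rw [hwge x hx.1, ← pow_mul])]
        rw [intervalIntegral.integral_comp_sub_right (fun x => x ^ ((m + 1) * 2)) c,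
          sub_self, integral_pow]
        simp [zero_pow]
      rw [hsplit, hleft, hright, zero_add]
    -- derivative description
    have hderiv_lt : ∀ x : ℝ, x < c → deriv w x = 0 := by
      intro x hx
      have he : w =ᶠ[nhds x] fun _ => (0:ℝ) := by
        filter_upwards [Iio_mem_nhds hx] with s hs
        exact hwle s (le_of_lt hs)
      rw [he.deriv_eq]; simp
    have hderiv_gt : ∀ x : ℝ, c < x → deriv w x = ((m : ℝ) + 1) * (x - c) ^ m := by
      intro x hx
      have he : w =ᶠ[nhds x] fun s => (s - c) ^ (m + 1) := by
        filter_upwards [Ioi_mem_nhds hx] with s hs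
        exact hwge s (le_of_lt hs)
      rw [he.deriv_eq]
      have h1 : HasDerivAt (fun s : ℝ => (s - c) ^ (m + 1)) (((m : ℝ) + 1) * (x - c) ^ m) x := by
        have h2 := (hasDerivAt_pow (m + 1) (x - c)).comp x ((hasDerivAt_id x).sub_const c)
        simpa [Function.comp_def] using h2
      exact h1.deriv
    have hne : ∀ᵐ x : ℝ, x ≠ c := by
      have : volume ({c} : Set ℝ) = 0 := Real.volume_singleton
      rw [ae_iff]
      convert this using 2
      ext x; simp
    -- H1 computation
    have hH1 : H1semisq w
        = ((m : ℝ) + 1) ^ 2 * ((1 - c) ^ (m * 2 + 1) / ((m * 2 : ℕ) + 1 : ℝ)) := by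
      have hint_left : IntervalIntegrable (fun x => deriv w x ^ 2) volume 0 c := by
        apply IntervalIntegrable.congr_ae (f := fun _ => (0:ℝ))
          (intervalIntegrable_const)
        filter_upwards [ae_restrict_of_ae hne,
          ae_restrict_mem measurableSet_uIoc] with x hx1 hx2
        rw [Set.uIoc_of_le hc0] at hx2
        rw [hderiv_lt x (lt_of_le_of_ne hx2.2 hx1)]; norm_num
      have hint_right : IntervalIntegrable (fun x => deriv w x ^ 2) volume c 1 := by
        apply IntervalIntegrable.congr_ae
          (f := fun x => (((m : ℝ) + 1) * (x - c) ^ m) ^ 2)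
          (Continuous.intervalIntegrable (by continuity) c 1)
        filter_upwards [ae_restrict_mem measurableSet_uIoc] with x hx
        rw [Set.uIoc_of_le hc1] at hx
        rw [hderiv_gt x hx.1]
      have hsplit : H1semisq w = (∫ x in (0:ℝ)..c, deriv w x ^ 2)
          + ∫ x in c..(1:ℝ), deriv w x ^ 2 := by
        rw [H1semisq]
        exact (intervalIntegral.integral_add_adjacent_intervals hint_left hint_right).symm
      have hleft : (∫ x in (0:ℝ)..c, deriv w x ^ 2) = 0 := by
        rw [intervalIntegral.integral_congr_ae (g := fun _ => (0:ℝ)) ?_]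
        · simp
        · filter_upwards [hne] with x hx1 hx2
          rw [Set.uIoc_of_le hc0] at hx2
          rw [hderiv_lt x (lt_of_le_of_ne hx2.2 hx1)]; norm_num
      have hright : (∫ x in c..(1:ℝ), deriv w x ^ 2)
          = ((m : ℝ) + 1) ^ 2 * ((1 - c) ^ (m * 2 + 1) / ((m * 2 : ℕ) + 1 : ℝ)) := by
        rw [intervalIntegral.integral_congr_ae
          (g := fun x => ((m : ℝ) + 1) ^ 2 * (x - c) ^ (m * 2)) ?_]
        · rw [intervalIntegral.integral_const_mul,
            intervalIntegral.integral_comp_sub_right (fun x => x ^ (m * 2)) c,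
            sub_self, integral_pow]
          simp [zero_pow]
        · refine Filter.Eventually.of_forall (fun x hx => ?_)
          rw [Set.uIoc_of_le hc1] at hx
          rw [hderiv_gt x hx.1, mul_pow, ← pow_mul]
      rw [hsplit, hleft, hright, zero_add]
    -- final inequality
    rw [hL2, hH1]
    have hA : (0:ℝ) ≤ (1 - c) ^ ((m + 1) * 2 + 1) / (((m + 1) * 2 : ℕ) + 1 : ℝ) := by
      positivity
    have key : ((((m:ℝ) + 1) * n) ^ 2) * ((1 - c) ^ ((m + 1) * 2 + 1) / (((m + 1) * 2 : ℕ) + 1 : ℝ))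
        ≤ ((m : ℝ) + 1) ^ 2 * ((1 - c) ^ (m * 2 + 1) / ((m * 2 : ℕ) + 1 : ℝ)) := by
      have hnt : (n : ℝ) * (1 - c) = 1 := by
        rw [h1c]; field_simp
      have hexp : (m + 1) * 2 + 1 = (m * 2 + 1) + 2 := by ring
      rw [hexp, pow_add]
      have heq : ((((m:ℝ) + 1) * n) ^ 2) * ((1 - c) ^ (m * 2 + 1) * (1 - c) ^ 2 / (((m + 1) * 2 : ℕ) + 1 : ℝ))
          = (((m:ℝ) + 1) ^ 2 * ((n : ℝ) * (1 - c)) ^ 2) * ((1 - c) ^ (m * 2 + 1) / (((m + 1) * 2 : ℕ) + 1 : ℝ)) := by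
        ring
      rw [heq, hnt, one_pow, mul_one]
      have hd1 : (0:ℝ) < ((m * 2 : ℕ) : ℝ) + 1 := by positivity
      have hd2 : ((m * 2 : ℕ) : ℝ) + 1 ≤ (((m + 1) * 2 : ℕ) : ℝ) + 1 := by
        push_cast; linarith
      have hxnn : (0:ℝ) ≤ (1 - c) ^ (m * 2 + 1) := by positivity
      gcongr
    calc ((m + 1 : ℕ) : ℝ) * n * Real.sqrt ((1 - c) ^ ((m + 1) * 2 + 1) / (((m + 1) * 2 : ℕ) + 1 : ℝ))
        = Real.sqrt (((((m:ℝ) + 1) * n) ^ 2) * ((1 - c) ^ ((m + 1) * 2 + 1) / (((m + 1) * 2 : ℕ) + 1 : ℝ))) := by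
          rw [Real.sqrt_mul (sq_nonneg _), Real.sqrt_sq (by positivity)]
          push_cast; ring
      _ ≤ Real.sqrt (((m : ℝ) + 1) ^ 2 * ((1 - c) ^ (m * 2 + 1) / ((m * 2 : ℕ) + 1 : ℝ))) :=
          Real.sqrt_le_sqrt key
end

section
/- Let A and L be SPD n×n real matrices, let P be an n×m matrix with full column rank, set A_c := PᵀAP and T := P·A_c⁻¹·Pᵀ·A, let τ ∈ ℝ, set S := I − τ·L⁻¹·A, let k ∈ ℕ, and let c ≥ 0 be such that ‖(I−T)·S^{2k}·v‖_L ≤ c·‖v‖_L for all v ∈ ℝⁿ. Then ‖Sᵏ·(I−T)·Sᵏ·u‖_A ≤ c·‖u‖_A for all u ∈ ℝⁿ. (The operator Sᵏ(I−T)Sᵏ is self-adjoint with respect to the A-inner product, so its A-operator norm equals the spectral radius of (I−T)S^{2k}, which is bounded by the L-operator norm of (I−T)S^{2k}.) -/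
open Matrix

/-- The `Q`-norm of a vector: `‖v‖_Q := √(vᵀ Q v)`. -/
noncomputable def matNorm {n : ℕ} (Q : Matrix (Fin n) (Fin n) ℝ) (v : Fin n → ℝ) : ℝ :=
  Real.sqrt (v ⬝ᵥ Q *ᵥ v)

lemma ct_eq_t {n m : ℕ} (A : Matrix (Fin n) (Fin m) ℝ) : Aᴴ = Aᵀ := by
  ext i j; simp [conjTranspose_apply]

/-- A real symmetric matrix whose eigenvalues are all `≤ c` in absolute value
satisfies `‖N x‖ ≤ c ‖x‖`. -/
lemma herm_mulVec_norm_le {n : ℕ} {N : Matrix (Fin n) (Fin n) ℝ} (hN : N.IsHermitian)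
    {c : ℝ} (hc : 0 ≤ c) (h : ∀ i, |hN.eigenvalues i| ≤ c) (x : Fin n → ℝ) :
    Real.sqrt ((N *ᵥ x) ⬝ᵥ (N *ᵥ x)) ≤ c * Real.sqrt (x ⬝ᵥ x) := by
  set U : Matrix (Fin n) (Fin n) ℝ := (hN.eigenvectorUnitary : Matrix (Fin n) (Fin n) ℝ) with hU
  have hUV : U * Uᴴ = 1 := by
    rw [← star_eq_conjTranspose]
    exact (Matrix.mem_unitaryGroup_iff).mp hN.eigenvectorUnitary.2
  have hVU : Uᴴ * U = 1 := by
    rw [← star_eq_conjTranspose]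
    exact (Matrix.mem_unitaryGroup_iff').mp hN.eigenvectorUnitary.2
  have hNT : Nᵀ = N := by rw [← ct_eq_t, hN.eq]
  have hD : N = U * diagonal hN.eigenvalues * Uᴴ := by
    rw [← star_eq_conjTranspose, hU]
    convert hN.spectral_theorem using 3
    rw [Unitary.conjStarAlgAut_apply]; rfl
  -- N * N = U * diagonal (λ²) * Uᴴ
  have hNN : N * N = U * diagonal (fun i => hN.eigenvalues i ^ 2) * Uᴴ := by
    conv_lhs => rw [hD]
    calc U * diagonal hN.eigenvalues * Uᴴ * (U * diagonal hN.eigenvalues * Uᴴ)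
        = U * diagonal hN.eigenvalues * (Uᴴ * U) * diagonal hN.eigenvalues * Uᴴ := by
          noncomm_ring
      _ = U * (diagonal hN.eigenvalues * diagonal hN.eigenvalues) * Uᴴ := by
          rw [hVU]; noncomm_ring
      _ = U * diagonal (fun i => hN.eigenvalues i ^ 2) * Uᴴ := by
          rw [diagonal_mul_diagonal]
          congr 1; ext i; ring_nf
  have hM : (c ^ 2 • (1 : Matrix (Fin n) (Fin n) ℝ) - N * N).PosSemidef := by
    have : c ^ 2 • (1 : Matrix (Fin n) (Fin n) ℝ) - N * N
        = U * diagonal (fun i => c ^ 2 - hN.eigenvalues i ^ 2) * Uᴴ := by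
      rw [hNN]
      have h1 : c ^ 2 • (1 : Matrix (Fin n) (Fin n) ℝ)
          = U * diagonal (fun _ => c ^ 2) * Uᴴ := by
        rw [smul_one_eq_diagonal]
        calc diagonal (fun _ => c ^ 2) = diagonal (fun _ => c^2) * (U * Uᴴ) := by
              rw [hUV, mul_one]
          _ = U * diagonal (fun _ => c ^ 2) * Uᴴ := by
              rw [← mul_assoc]
              congr 1
              ext i j
              simp [diagonal_mul, mul_diagonal, mul_comm]
      rw [h1, ← sub_mul, ← mul_sub, diagonal_sub]
    rw [this]
    refine (posSemidef_diagonal_iff.mpr fun i => ?_).mul_mul_conjTranspose_same U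
    have := h i
    nlinarith [sq_abs (hN.eigenvalues i), abs_nonneg (hN.eigenvalues i)]
  -- quadratic form bound
  have key : (N *ᵥ x) ⬝ᵥ (N *ᵥ x) ≤ c ^ 2 * (x ⬝ᵥ x) := by
    have h0 := hM.dotProduct_mulVec_nonneg x
    simp only [star_trivial, RCLike.re_to_real] at h0
    have hrw : x ⬝ᵥ ((c ^ 2 • (1 : Matrix (Fin n) (Fin n) ℝ) - N * N) *ᵥ x)
        = c ^ 2 * (x ⬝ᵥ x) - x ⬝ᵥ ((N * N) *ᵥ x) := by
      rw [sub_mulVec, dotProduct_sub, smul_mulVec, one_mulVec, dotProduct_smul,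
        smul_eq_mul]
    have hdp : x ⬝ᵥ ((N * N) *ᵥ x) = (N *ᵥ x) ⬝ᵥ (N *ᵥ x) := by
      have hvm : x ᵥ* N = N *ᵥ x := by
        conv_lhs => rw [← hNT, vecMul_transpose]
      rw [← mulVec_mulVec, dotProduct_mulVec, hvm]
    rw [hrw, hdp] at h0
    linarith
  calc Real.sqrt ((N *ᵥ x) ⬝ᵥ (N *ᵥ x)) ≤ Real.sqrt (c ^ 2 * (x ⬝ᵥ x)) :=
        Real.sqrt_le_sqrt key
    _ = c * Real.sqrt (x ⬝ᵥ x) := by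
        rw [Real.sqrt_mul (by positivity), Real.sqrt_sq hc]

lemma vecMul_eq_mulVec_of_symm {n : ℕ} {R : Matrix (Fin n) (Fin n) ℝ} (h : Rᵀ = R)
    (y : Fin n → ℝ) : y ᵥ* R = R *ᵥ y := by
  conv_lhs => rw [← h, vecMul_transpose]

/-- with `A`, `L` SPD, `P` of full column rank, `A_c = PᵀAP`,
`T = P A_c⁻¹ Pᵀ A`, `S = I − τ L⁻¹ A`, and `‖(I−T) S^{2k} v‖_L ≤ c ‖v‖_L` for
all `v`, one has `‖Sᵏ (I−T) Sᵏ u‖_A ≤ c ‖u‖_A`. -/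
theorem stmt19 {n m : ℕ} (A L : Matrix (Fin n) (Fin n) ℝ)
    (hA : A.PosDef) (hL : L.PosDef)
    (P : Matrix (Fin n) (Fin m) ℝ) (hP : P.rank = m)
    (T : Matrix (Fin n) (Fin n) ℝ) (hT : T = P * (Pᵀ * A * P)⁻¹ * (Pᵀ * A))
    (τ : ℝ)
    (S : Matrix (Fin n) (Fin n) ℝ) (hS : S = 1 - τ • (L⁻¹ * A))
    (k : ℕ) (c : ℝ) (hc : 0 ≤ c)
    (hbound : ∀ v : Fin n → ℝ,
        matNorm L (((1 - T) * S ^ (2 * k)) *ᵥ v) ≤ c * matNorm L v) :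
    ∀ u : Fin n → ℝ,
      matNorm A ((S ^ k * (1 - T) * S ^ k) *ᵥ u) ≤ c * matNorm A u := by
  have hAsym : Aᵀ = A := by rw [← ct_eq_t, hA.1.eq]
  have hLsym : Lᵀ = L := by rw [← ct_eq_t, hL.1.eq]
  -- A-self-adjointness of S
  have hSA : Sᵀ * A = A * S := by
    have hST : Sᵀ = 1 - τ • (A * L⁻¹) := by
      rw [hS, transpose_sub, transpose_smul, transpose_mul, transpose_nonsing_inv,
        hLsym, hAsym, transpose_one]
    rw [hST, hS]
    simp only [sub_mul, mul_sub, one_mul, mul_one, smul_mul_assoc, mul_smul_comm,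
      mul_assoc]
  -- A-self-adjointness of T
  have hTA : Tᵀ * A = A * T := by
    have hAc : (Pᵀ * A * P)ᵀ = Pᵀ * A * P := by
      rw [transpose_mul, transpose_mul, transpose_transpose, hAsym, ← Matrix.mul_assoc]
    have hTT : Tᵀ = A * P * (Pᵀ * A * P)⁻¹ * Pᵀ := by
      rw [hT, transpose_mul, transpose_mul, transpose_mul, transpose_nonsing_inv, hAc,
        transpose_transpose, hAsym]
      simp only [Matrix.mul_assoc]
    rw [hTT, hT]
    simp only [Matrix.mul_assoc]
  have hCA : (1 - T)ᵀ * A = A * (1 - T) := by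
    rw [transpose_sub, transpose_one, sub_mul, mul_sub, one_mul, mul_one, hTA]
  have hSkA : ∀ j : ℕ, (S ^ j)ᵀ * A = A * S ^ j := by
    intro j
    rw [transpose_pow]
    induction j with
    | zero => simp
    | succ j ih =>
        rw [pow_succ, pow_succ, mul_assoc, hSA, ← mul_assoc, ih, mul_assoc]
  set E : Matrix (Fin n) (Fin n) ℝ := S ^ k * (1 - T) * S ^ k with hEdef
  have hET : Eᵀ = (S ^ k)ᵀ * ((1 - T)ᵀ * (S ^ k)ᵀ) := by
    rw [hEdef, transpose_mul, transpose_mul]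
  have hEA : Eᵀ * A = A * E := by
    calc Eᵀ * A = (S ^ k)ᵀ * ((1 - T)ᵀ * ((S ^ k)ᵀ * A)) := by
          rw [hET]; simp only [mul_assoc]
      _ = (S ^ k)ᵀ * ((1 - T)ᵀ * (A * S ^ k)) := by rw [hSkA k]
      _ = (S ^ k)ᵀ * (((1 - T)ᵀ * A) * S ^ k) := by simp only [mul_assoc]
      _ = (S ^ k)ᵀ * ((A * (1 - T)) * S ^ k) := by rw [hCA]
      _ = ((S ^ k)ᵀ * A) * ((1 - T) * S ^ k) := by simp only [mul_assoc]
      _ = (A * S ^ k) * ((1 - T) * S ^ k) := by rw [hSkA k]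
      _ = A * E := by rw [hEdef]; simp only [mul_assoc]
  -- the square root of A
  open scoped MatrixOrder in
  set R : Matrix (Fin n) (Fin n) ℝ := CFC.sqrt A with hRdef
  open scoped MatrixOrder in
  have hRR : R * R = A := CFC.sqrt_mul_sqrt_self A hA.posSemidef.nonneg
  open scoped MatrixOrder in
  have hRT : Rᵀ = R := by rw [← ct_eq_t]; exact (CFC.sqrt_nonneg A).posSemidef.1.eq
  have hRdet : IsUnit R.det := by
    have h1 : R.det * R.det = A.det := by rw [← det_mul, hRR]
    have h2 : (0 : ℝ) < A.det := hA.det_pos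
    refine isUnit_iff_ne_zero.2 fun h0 => ?_
    rw [h0, mul_zero] at h1
    linarith
  have hRiR : R⁻¹ * R = 1 := nonsing_inv_mul R hRdet
  have hRRi : R * R⁻¹ = 1 := mul_nonsing_inv R hRdet
  have hRiT : (R⁻¹)ᵀ = R⁻¹ := by rw [transpose_nonsing_inv, hRT]
  set N : Matrix (Fin n) (Fin n) ℝ := R * E * R⁻¹ with hNdef
  have hNH : N.IsHermitian := by
    show Nᴴ = N
    rw [ct_eq_t, hNdef, transpose_mul, transpose_mul, hRiT, hRT]
    calc R⁻¹ * (Eᵀ * R)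
        = R⁻¹ * (Eᵀ * (R * (R * R⁻¹))) := by rw [hRRi, mul_one]
      _ = R⁻¹ * (Eᵀ * (R * R)) * R⁻¹ := by simp only [mul_assoc]
      _ = R⁻¹ * (Eᵀ * A) * R⁻¹ := by rw [hRR]
      _ = R⁻¹ * (A * E) * R⁻¹ := by rw [hEA]
      _ = R⁻¹ * ((R * R) * E) * R⁻¹ := by rw [hRR]
      _ = (R⁻¹ * R) * (R * (E * R⁻¹)) := by simp only [mul_assoc]
      _ = R * E * R⁻¹ := by rw [hRiR, one_mul]; simp only [mul_assoc]
  -- every eigenvalue of N is at most c in absolute value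
  have hev : ∀ i, |hNH.eigenvalues i| ≤ c := by
    intro i
    set lam := hNH.eigenvalues i with hlam
    set w : Fin n → ℝ := ⇑(hNH.eigenvectorBasis i) with hwdef
    have hw : N *ᵥ w = lam • w := hNH.mulVec_eigenvectorBasis i
    have hw0 : w ≠ 0 := by
      intro h0
      have h1 : ‖hNH.eigenvectorBasis i‖ = 1 := hNH.eigenvectorBasis.orthonormal.1 i
      have h2 : ∀ j, hNH.eigenvectorBasis i j = 0 := fun j => congrFun h0 j
      rw [EuclideanSpace.norm_eq] at h1
      simp only [h2, norm_zero] at h1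
      simp at h1
    set v : Fin n → ℝ := R⁻¹ *ᵥ w with hvdef
    have hwv : R *ᵥ v = w := by
      rw [hvdef, mulVec_mulVec, hRRi, one_mulVec]
    have hEv : E *ᵥ v = lam • v := by
      have h4 : E * R⁻¹ = R⁻¹ * N := by
        rw [hNdef]
        calc E * R⁻¹ = (R⁻¹ * R) * (E * R⁻¹) := by rw [hRiR, one_mul]
          _ = R⁻¹ * (R * E * R⁻¹) := by simp only [mul_assoc]
      calc E *ᵥ v = (E * R⁻¹) *ᵥ w := by rw [hvdef, mulVec_mulVec]
        _ = (R⁻¹ * N) *ᵥ w := by rw [h4]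
        _ = R⁻¹ *ᵥ (N *ᵥ w) := (mulVec_mulVec _ _ _).symm
        _ = lam • v := by rw [hw, mulVec_smul, hvdef]
    set z : Fin n → ℝ := ((1 - T) * S ^ k) *ᵥ v with hzdef
    have hBz : ((1 - T) * S ^ (2 * k)) *ᵥ z = lam • z := by
      have hmat : (1 - T) * S ^ (2 * k) * ((1 - T) * S ^ k) = (1 - T) * S ^ k * E := by
        have h2k : S ^ (2 * k) = S ^ k * S ^ k := by rw [two_mul, pow_add]
        rw [hEdef, h2k]
        simp only [mul_assoc]
      calc ((1 - T) * S ^ (2 * k)) *ᵥ z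
          = ((1 - T) * S ^ (2 * k) * ((1 - T) * S ^ k)) *ᵥ v := by
            rw [hzdef, mulVec_mulVec]
        _ = ((1 - T) * S ^ k * E) *ᵥ v := by rw [hmat]
        _ = ((1 - T) * S ^ k) *ᵥ (E *ᵥ v) := (mulVec_mulVec _ _ _).symm
        _ = lam • z := by rw [hEv, mulVec_smul, hzdef]
    by_cases hz : z = 0
    · -- then lam • v = 0 and v ≠ 0, so lam = 0
      have hEv0 : E *ᵥ v = S ^ k *ᵥ z := by
        calc E *ᵥ v = (S ^ k * ((1 - T) * S ^ k)) *ᵥ v := by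
              rw [hEdef]; simp only [mul_assoc]
          _ = S ^ k *ᵥ (((1 - T) * S ^ k) *ᵥ v) := (mulVec_mulVec _ _ _).symm
          _ = S ^ k *ᵥ z := by rw [hzdef]
      have h4 : lam • v = 0 := by
        rw [← hEv, hEv0, hz, mulVec_zero]
      have hv0 : v ≠ 0 := by
        intro h0
        apply hw0
        rw [← hwv, h0, mulVec_zero]
      rcases smul_eq_zero.mp h4 with h5 | h5
      · rw [h5, abs_zero]; exact hc
      · exact absurd h5 hv0
    · -- use the bound
      have hb := hbound z
      rw [hBz] at hb
      have hLz : 0 < z ⬝ᵥ L *ᵥ z := by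
        have := hL.dotProduct_mulVec_pos hz
        simpa using this
      have hnz : 0 < matNorm L z := by
        rw [matNorm]
        exact Real.sqrt_pos.mpr hLz
      have hscale : matNorm L (lam • z) = |lam| * matNorm L z := by
        have hq : (lam • z) ⬝ᵥ L *ᵥ (lam • z) = (lam * lam) * (z ⬝ᵥ L *ᵥ z) := by
          rw [mulVec_smul, smul_dotProduct, dotProduct_smul, smul_eq_mul, smul_eq_mul]
          ring
        rw [matNorm, matNorm, hq, Real.sqrt_mul (mul_self_nonneg lam),
          Real.sqrt_mul_self_eq_abs]
      rw [hscale] at hb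
      exact le_of_mul_le_mul_right hb hnz
  -- conclude
  intro u
  have hnorm : ∀ y : Fin n → ℝ, matNorm A y = Real.sqrt ((R *ᵥ y) ⬝ᵥ (R *ᵥ y)) := by
    intro y
    rw [matNorm, ← hRR, ← mulVec_mulVec, dotProduct_mulVec, vecMul_eq_mulVec_of_symm hRT]
  have hswap : R *ᵥ (E *ᵥ u) = N *ᵥ (R *ᵥ u) := by
    rw [mulVec_mulVec, mulVec_mulVec, hNdef, mul_assoc (R * E) R⁻¹ R, hRiR, mul_one]
  calc matNorm A (E *ᵥ u) = Real.sqrt ((R *ᵥ (E *ᵥ u)) ⬝ᵥ (R *ᵥ (E *ᵥ u))) := hnorm _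
    _ = Real.sqrt ((N *ᵥ (R *ᵥ u)) ⬝ᵥ (N *ᵥ (R *ᵥ u))) := by rw [hswap]
    _ ≤ c * Real.sqrt ((R *ᵥ u) ⬝ᵥ (R *ᵥ u)) := herm_mulVec_norm_le hNH hc hev _
    _ = c * matNorm A u := by rw [hnorm]
end
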